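/- Let T be a functional on probability measures that is Fisher consistent along simple perturbations: √n[T(μ_{θ_⋆+t/√n, ζ_n}) − θ_⋆] = t + o(1) for every t. Suppose τ: Θ → ℝ has bounded derivative and that n·H²(μ_{θ_n,ζ_n}, μ_⋆) → (1/8) tᵀ H_⋆ t with H_⋆ positive definite. Then liminf_n sup_{Q ∈ B_H(μ_⋆, r/√n)} n(τ∘T(Q) − τ(θ_⋆))² ≥ 8 r² (dτ(θ_⋆)/dθ) H_⋆^{-1} (dτ(θ_⋆)/dθ)ᵀ. -/

import Mathlib

open MeasureTheory Filter Matrix Asymptotics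

/-- The Hellinger distance between two measures, computed with the dominating measure
`μ + ν`. -/
noncomputable def hellingerDist {Y : Type*} [MeasurableSpace Y]
    (μ ν : Measure Y) : ℝ :=
  Real.sqrt (∫ y, (Real.sqrt ((μ.rnDeriv (μ + ν)) y).toReal
      - Real.sqrt ((ν.rnDeriv (μ + ν)) y).toReal) ^ 2 ∂(μ + ν))

private lemma inv_sqrt_tendsto_zero :
    Tendsto (fun n : ℕ => (Real.sqrt n)⁻¹) atTop (nhds 0) := by
  have h1 : Tendsto (fun n : ℕ => ((n : ℝ))⁻¹) atTop (nhds 0) :=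
    tendsto_inv_atTop_nhds_zero_nat
  have h2 := (Real.continuous_sqrt.tendsto 0).comp h1
  simpa [Function.comp_def, Real.sqrt_inv] using h2

private lemma delta_method {d : ℕ} (τ : (Fin d → ℝ) → ℝ) (θstar t a : Fin d → ℝ)
    (hτdiff : Differentiable ℝ τ) (ha : ∀ s, fderiv ℝ τ θstar s = a ⬝ᵥ s)
    (θn : ℕ → (Fin d → ℝ))
    (h : Tendsto (fun n : ℕ => Real.sqrt n • (θn n - θstar)) atTop (nhds t)) :
    Tendsto (fun n : ℕ => Real.sqrt n * (τ (θn n) - τ θstar)) atTop (nhds (a ⬝ᵥ t)) := by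
  have hθ : Tendsto θn atTop (nhds θstar) := by
    have h0 : Tendsto (fun n : ℕ => (Real.sqrt n)⁻¹ • (Real.sqrt n • (θn n - θstar)))
        atTop (nhds ((0 : ℝ) • t)) := inv_sqrt_tendsto_zero.smul h
    rw [zero_smul] at h0
    have heq : ∀ᶠ n : ℕ in atTop,
        (Real.sqrt n)⁻¹ • (Real.sqrt n • (θn n - θstar)) = θn n - θstar := by
      filter_upwards [eventually_ge_atTop 1] with n hn
      have hc : (0 : ℝ) < n := by exact_mod_cast hn
      have hs : Real.sqrt n ≠ 0 := by positivity
      rw [smul_smul, inv_mul_cancel₀ hs, one_smul]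
    have h1 := (tendsto_congr' heq).mp h0
    have h2 := h1.add_const θstar
    simpa using h2
  set f := fderiv ℝ τ θstar with hf
  have hder : HasFDerivAt τ f θstar := (hτdiff θstar).hasFDerivAt
  have ho : (fun θ => τ θ - τ θstar - f (θ - θstar)) =o[nhds θstar] (fun θ => θ - θstar) :=
    hder.isLittleO
  have ho2 : (fun n : ℕ => τ (θn n) - τ θstar - f (θn n - θstar))
      =o[atTop] (fun n : ℕ => θn n - θstar) := ho.comp_tendsto hθ
  have hO : (fun n : ℕ => Real.sqrt n * ‖θn n - θstar‖) =O[atTop] (fun _ : ℕ => (1 : ℝ)) := by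
    have := (h.isBigO_one ℝ).norm_left
    simpa [norm_smul, Real.norm_eq_abs, abs_of_nonneg (Real.sqrt_nonneg _)] using this
  have h1 : (fun n : ℕ => Real.sqrt n * (τ (θn n) - τ θstar - f (θn n - θstar)))
      =o[atTop] (fun n : ℕ => Real.sqrt n * ‖θn n - θstar‖) :=
    (isBigO_refl (fun n : ℕ => Real.sqrt n) atTop).mul_isLittleO ho2.norm_right
  have hrem : Tendsto (fun n : ℕ => Real.sqrt n * (τ (θn n) - τ θstar - f (θn n - θstar)))
      atTop (nhds 0) := (isLittleO_one_iff ℝ).mp (h1.trans_isBigO hO)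
  have hlin : Tendsto (fun n : ℕ => f (Real.sqrt n • (θn n - θstar))) atTop (nhds (f t)) :=
    (f.continuous.tendsto t).comp h
  have hsum := hrem.add hlin
  rw [zero_add] at hsum
  have heq2 : ∀ n : ℕ, Real.sqrt n * (τ (θn n) - τ θstar - f (θn n - θstar))
      + f (Real.sqrt n • (θn n - θstar)) = Real.sqrt n * (τ (θn n) - τ θstar) := by
    intro n
    rw [f.map_smul, smul_eq_mul]
    ring
  rw [show f t = a ⬝ᵥ t from ha t] at hsum
  simpa only [heq2] using hsum

/-- Lower bound on the maximal asymptotic bias over shrinking Hellinger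
neighborhoods.  If `T` is Fisher consistent along simple perturbations whose Hellinger
distance satisfies `n·H²(μ_{t,n}, μ⋆) → (1/8) tᵀH⋆t`, and `τ` has bounded derivative
`a = dτ(θ⋆)/dθ`, then
`liminfₙ sup_{Q ∈ B_H(μ⋆, r/√n)} n(τ∘T(Q) − τ(θ⋆))² ≥ 8 r² aᵀH⋆⁻¹a`. -/
theorem bias_lower_bound_hellinger
    {Y : Type*} [MeasurableSpace Y]
    (μstar : Measure Y) [IsProbabilityMeasure μstar]
    {d : ℕ} (θstar : Fin d → ℝ) (T : Measure Y → (Fin d → ℝ))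
    (μpert : (Fin d → ℝ) → ℕ → Measure Y)
    (hpert : ∀ t n, IsProbabilityMeasure (μpert t n))
    (hFisher : ∀ t : Fin d → ℝ,
      Tendsto (fun n : ℕ => Real.sqrt n • (T (μpert t n) - θstar)) atTop (nhds t))
    (Hstar : Matrix (Fin d) (Fin d) ℝ) (hH : Hstar.PosDef)
    (hHell : ∀ t : Fin d → ℝ,
      Tendsto (fun n : ℕ => (n : ℝ) * hellingerDist (μpert t n) μstar ^ 2) atTop
        (nhds ((1 / 8) * (t ⬝ᵥ Hstar *ᵥ t))))
    (τ : (Fin d → ℝ) → ℝ) (a : Fin d → ℝ) (K : ℝ)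
    (hτdiff : Differentiable ℝ τ) (hτbdd : ∀ θ, ‖fderiv ℝ τ θ‖ ≤ K)
    (ha : ∀ s, fderiv ℝ τ θstar s = a ⬝ᵥ s)
    (r : ℝ) (hr : 0 < r) :
    ENNReal.ofReal (8 * r ^ 2 * (a ⬝ᵥ Hstar⁻¹ *ᵥ a)) ≤
      Filter.liminf (fun n : ℕ =>
        ⨆ Q ∈ {Q : Measure Y | IsProbabilityMeasure Q ∧
            hellingerDist Q μstar ≤ r / Real.sqrt n},
          ENNReal.ofReal ((n : ℝ) * (τ (T Q) - τ θstar) ^ 2)) atTop := by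
  set L := Filter.liminf (fun n : ℕ =>
        ⨆ Q ∈ {Q : Measure Y | IsProbabilityMeasure Q ∧
            hellingerDist Q μstar ≤ r / Real.sqrt n},
          ENNReal.ofReal ((n : ℝ) * (τ (T Q) - τ θstar) ^ 2)) atTop with hL
  have key : ∀ t : Fin d → ℝ, t ⬝ᵥ Hstar *ᵥ t < 8 * r ^ 2 →
      ENNReal.ofReal ((a ⬝ᵥ t) ^ 2) ≤ L := by
    intro t hlt
    -- Step 1: the value at the perturbation tends to (a ⬝ᵥ t)^2
    have hd := delta_method τ θstar t a hτdiff ha (fun n => T (μpert t n)) (hFisher t)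
    have h1 : Tendsto (fun n : ℕ => (n : ℝ) * (τ (T (μpert t n)) - τ θstar) ^ 2) atTop
        (nhds ((a ⬝ᵥ t) ^ 2)) := by
      have hsq := hd.pow 2
      have heq : ∀ n : ℕ, (Real.sqrt n * (τ (T (μpert t n)) - τ θstar)) ^ 2
          = (n : ℝ) * (τ (T (μpert t n)) - τ θstar) ^ 2 := by
        intro n
        rw [mul_pow, Real.sq_sqrt (Nat.cast_nonneg n)]
      simpa only [heq] using hsq
    -- Step 2: eventual membership in the Hellinger ball
    have hlt' : (1 / 8) * (t ⬝ᵥ Hstar *ᵥ t) < r ^ 2 := by linarith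
    have h2 : ∀ᶠ n : ℕ in atTop, μpert t n ∈ {Q : Measure Y | IsProbabilityMeasure Q ∧
        hellingerDist Q μstar ≤ r / Real.sqrt n} := by
      filter_upwards [(hHell t).eventually_lt_const hlt', eventually_ge_atTop 1] with n hn hn1
      refine ⟨hpert t n, ?_⟩
      have hnpos : (0 : ℝ) < n := by exact_mod_cast hn1
      have hd0 : 0 ≤ hellingerDist (μpert t n) μstar := Real.sqrt_nonneg _
      have hsq : hellingerDist (μpert t n) μstar ^ 2 ≤ r ^ 2 / n := by
        rw [le_div_iff₀ hnpos]
        nlinarith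
      calc hellingerDist (μpert t n) μstar
          = Real.sqrt (hellingerDist (μpert t n) μstar ^ 2) := (Real.sqrt_sq hd0).symm
        _ ≤ Real.sqrt (r ^ 2 / n) := Real.sqrt_le_sqrt hsq
        _ = r / Real.sqrt n := by
            rw [Real.sqrt_div (sq_nonneg r), Real.sqrt_sq hr.le]
    -- Step 3: compare liminfs
    have h3 : ∀ᶠ n : ℕ in atTop,
        ENNReal.ofReal ((n : ℝ) * (τ (T (μpert t n)) - τ θstar) ^ 2) ≤
        ⨆ Q ∈ {Q : Measure Y | IsProbabilityMeasure Q ∧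
            hellingerDist Q μstar ≤ r / Real.sqrt n},
          ENNReal.ofReal ((n : ℝ) * (τ (T Q) - τ θstar) ^ 2) := by
      filter_upwards [h2] with n hn
      exact le_biSup (fun Q => ENNReal.ofReal ((n : ℝ) * (τ (T Q) - τ θstar) ^ 2)) hn
    have h4 := (ENNReal.tendsto_ofReal h1).liminf_eq
    calc ENNReal.ofReal ((a ⬝ᵥ t) ^ 2)
        = Filter.liminf (fun n : ℕ =>
            ENNReal.ofReal ((n : ℝ) * (τ (T (μpert t n)) - τ θstar) ^ 2)) atTop := h4.symm
      _ ≤ L := liminf_le_liminf h3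
  -- Conclusion: optimize over t
  set X := 8 * r ^ 2 * (a ⬝ᵥ Hstar⁻¹ *ᵥ a) with hXdef
  by_cases hX0 : X ≤ 0
  · rw [ENNReal.ofReal_eq_zero.mpr hX0]
    exact zero_le
  push_neg at hX0
  set g := a ⬝ᵥ Hstar⁻¹ *ᵥ a with hgdef
  have hgpos : 0 < g := by nlinarith [sq_nonneg r]
  refine le_of_forall_lt fun c hc => ?_
  have hct : c ≠ ⊤ := (hc.trans ENNReal.ofReal_lt_top).ne
  set b := c.toReal with hbdef
  have hbX : b < X := (ENNReal.lt_ofReal_iff_toReal_lt hct).mp hc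
  set s : ℝ := max (1 / 2) ((b / X + 1) / 2) with hsdef
  have hs0 : 0 < s := lt_of_lt_of_le (by norm_num) (le_max_left _ _)
  have hs1 : s < 1 := by
    apply max_lt (by norm_num)
    have : b / X < 1 := (div_lt_one hX0).mpr hbX
    linarith
  have hbs : b < s * X := by
    have h5 : b / X < (b / X + 1) / 2 := by
      have : b / X < 1 := (div_lt_one hX0).mpr hbX
      linarith
    have h6 : b / X < s := h5.trans_le (le_max_right _ _)
    calc b = b / X * X := by field_simp
      _ < s * X := by exact mul_lt_mul_of_pos_right h6 hX0
  set α := Real.sqrt (8 * r ^ 2 * s / g) with hαdef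
  have hα2 : α ^ 2 = 8 * r ^ 2 * s / g := Real.sq_sqrt (by positivity)
  set t := α • (Hstar⁻¹ *ᵥ a) with htdef
  have hdet : IsUnit Hstar.det := isUnit_iff_ne_zero.mpr hH.det_pos.ne'
  have hHt : Hstar *ᵥ t = α • a := by
    rw [htdef, mulVec_smul, mulVec_mulVec, mul_nonsing_inv _ hdet, one_mulVec]
  have hat : a ⬝ᵥ t = α * g := by
    rw [htdef, dotProduct_smul, smul_eq_mul, hgdef]
  have hquad : t ⬝ᵥ Hstar *ᵥ t = 8 * r ^ 2 * s := by
    have h7 : t ⬝ᵥ Hstar *ᵥ t = α * (t ⬝ᵥ a) := by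
      rw [hHt, dotProduct_smul, smul_eq_mul]
    have h8 : t ⬝ᵥ a = a ⬝ᵥ t := dotProduct_comm _ _
    rw [h7, h8, hat, ← mul_assoc, ← sq, hα2]
    field_simp
  have hval : (a ⬝ᵥ t) ^ 2 = s * X := by
    rw [hat, mul_pow, hα2, hXdef]
    field_simp
  have hlt8 : t ⬝ᵥ Hstar *ᵥ t < 8 * r ^ 2 := by
    rw [hquad]
    nlinarith
  have hfin := key t hlt8
  rw [hval] at hfin
  calc c < ENNReal.ofReal (s * X) :=
        (ENNReal.lt_ofReal_iff_toReal_lt hct).mpr hbs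
    _ ≤ L := hfin
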